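/- Let q > 0, λ > 0, d > 0. Then there exists p₀ > 1 such that for all p ≥ p₀, the map x ↦ λ^{1/(p-1)} ((p-1)/p) (d/2)^{p/(p-1)} exp(x^q/(p-1)) has a positive fixed point. -/

import Mathlib

open Real Filter

theorem stmt_17 (q lam d : ℝ) (hq : 0 < q) (hlam : 0 < lam) (hd : 0 < d) :
    ∃ p₀ : ℝ, 1 < p₀ ∧ ∀ p : ℝ, p₀ ≤ p →
      ∃ x : ℝ, 0 < x ∧
        lam ^ (1 / (p - 1)) * ((p - 1) / p) * (d / 2) ^ (p / (p - 1)) *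
          Real.exp (x ^ q / (p - 1)) = x := by
  set F : ℝ → ℝ := fun p =>
    lam ^ (1 / (p - 1)) * ((p - 1) / p) * (d / 2) ^ (p / (p - 1)) *
      Real.exp (d ^ q / (p - 1)) with hF
  have hsub : Tendsto (fun p : ℝ => p - 1) atTop atTop :=
    tendsto_atTop_add_const_right _ (-1) tendsto_id |>.congr (by intro x; simp [sub_eq_add_neg, add_comm])
  have h1 : Tendsto (fun p : ℝ => 1 / (p - 1)) atTop (nhds 0) := by
    simpa [one_div, Pi.inv_def] using hsub.inv_tendsto_atTop
  have h0 : Tendsto (fun p : ℝ => 1 / p) atTop (nhds 0) := by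
    simpa [one_div] using (tendsto_inv_atTop_zero : Tendsto (fun p : ℝ => p⁻¹) atTop (nhds 0))
  have h2 : Tendsto (fun p : ℝ => lam ^ (1 / (p - 1))) atTop (nhds 1) := by
    have := (Real.continuousAt_const_rpow (a := lam) (b := (0:ℝ)) hlam.ne').tendsto.comp h1
    simpa [Function.comp_def] using this
  have h3 : Tendsto (fun p : ℝ => (p - 1) / p) atTop (nhds 1) := by
    have h : Tendsto (fun p : ℝ => 1 - 1 / p) atTop (nhds 1) := by
      simpa using tendsto_const_nhds.sub h0
    refine h.congr' ?_
    filter_upwards [eventually_gt_atTop (0:ℝ)] with p hp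
    field_simp
  have h4 : Tendsto (fun p : ℝ => p / (p - 1)) atTop (nhds 1) := by
    have h : Tendsto (fun p : ℝ => 1 + 1 / (p - 1)) atTop (nhds 1) := by
      simpa using tendsto_const_nhds.add h1
    refine h.congr' ?_
    filter_upwards [eventually_gt_atTop (1:ℝ)] with p hp
    have hne : p - 1 ≠ 0 := by linarith
    field_simp
    ring
  have h5 : Tendsto (fun p : ℝ => (d / 2) ^ (p / (p - 1))) atTop (nhds (d / 2)) := by
    have := (Real.continuousAt_const_rpow (a := d/2) (b := (1:ℝ))
      (by positivity)).tendsto.comp h4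
    simpa [Function.comp_def] using this
  have h6 : Tendsto (fun p : ℝ => Real.exp (d ^ q / (p - 1))) atTop (nhds 1) := by
    have h : Tendsto (fun p : ℝ => d ^ q / (p - 1)) atTop (nhds 0) := by
      have := h1.const_mul (d ^ q)
      simpa [div_eq_mul_inv, one_div, mul_comm] using this
    simpa [Function.comp_def] using (Real.continuous_exp.continuousAt.tendsto.comp h)
  have hFt : Tendsto F atTop (nhds (d / 2)) := by
    have := ((h2.mul h3).mul h5).mul h6
    simpa [hF] using this
  have hev : ∀ᶠ p in atTop, F p < d := hFt.eventually_lt_const (by linarith)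
  obtain ⟨a, ha⟩ := (hev.and (eventually_ge_atTop (2:ℝ))).exists_forall_of_atTop
  refine ⟨max a 2, lt_of_lt_of_le one_lt_two (le_max_right _ _), fun p hp => ?_⟩
  obtain ⟨hFp, hp2⟩ := ha p (le_trans (le_max_left a 2) hp)
  have hp1 : (1:ℝ) < p := by linarith
  have hp1' : (0:ℝ) < p - 1 := by linarith
  set C : ℝ := lam ^ (1 / (p - 1)) * ((p - 1) / p) * (d / 2) ^ (p / (p - 1)) with hC
  have hCpos : 0 < C := by
    have := Real.rpow_pos_of_pos hlam (1 / (p - 1))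
    have := Real.rpow_pos_of_pos (show (0:ℝ) < d/2 by positivity) (p / (p - 1))
    have : 0 < (p - 1) / p := by positivity
    positivity
  set ε : ℝ := min C d / 2 with hε
  have hεpos : 0 < ε := by positivity
  have hmin : 0 < min C d := lt_min hCpos hd
  have hεC : ε < C := by
    rw [hε]; linarith [min_le_left C d]
  have hεd : ε ≤ d := by
    rw [hε]; linarith [min_le_right C d]
  set g : ℝ → ℝ := fun x => C * Real.exp (x ^ q / (p - 1)) - x with hg
  have hcont : ContinuousOn g (Set.Icc ε d) := by
    intro x hx
    have hx0 : x ≠ 0 := (lt_of_lt_of_le hεpos hx.1).ne'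
    have : ContinuousAt g x := by
      have h1 : ContinuousAt (fun x : ℝ => x ^ q) x :=
        Real.continuousAt_rpow_const x q (Or.inl hx0)
      exact (continuousAt_const.mul
        (Real.continuous_exp.continuousAt.comp (h1.div_const _))).sub continuousAt_id
    exact this.continuousWithinAt
  have hgε : 0 < g ε := by
    have h1 : (1:ℝ) ≤ Real.exp (ε ^ q / (p - 1)) := by
      refine Real.one_le_exp ?_
      have := (Real.rpow_pos_of_pos hεpos q).le
      positivity
    have : C ≤ C * Real.exp (ε ^ q / (p - 1)) := le_mul_of_one_le_right hCpos.le h1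
    simp only [hg]
    linarith
  have hgd : g d < 0 := by
    have key : C * Real.exp (d ^ q / (p - 1)) = F p := rfl
    simp only [hg]
    linarith [hFp]
  have hmem : (0:ℝ) ∈ Set.Icc (g d) (g ε) := ⟨hgd.le, hgε.le⟩
  obtain ⟨x, hxmem, hgx⟩ := intermediate_value_Icc' hεd hcont hmem
  refine ⟨x, lt_of_lt_of_le hεpos hxmem.1, ?_⟩
  have h := hgx
  simp only [hg] at h
  linarith
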